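/- Let k ≥ 1 be an integer, let p be a prime, let ℓ be a natural number, and let i be an integer with 1 ≤ i ≤ p − 1. Then the integer ∑_{j=0}^{k−1} (−1)^{j·p} · (kp choose (jp + i)) · (jp + i)^{ℓ} is divisible by p^k. -/

import Mathlib

open Polynomial Finset

/-- Sum of coefficients of `F` at indices `≡ i (mod p)`, weighted by `m ^ ℓ`. -/
noncomputable def psi (p i ℓ : ℕ) (F : Polynomial ℤ) : ℤ :=
  F.sum fun m a => if m % p = i % p then (m : ℤ) ^ ℓ * a else 0

lemma psi_zero (p i ℓ : ℕ) : psi p i ℓ 0 = 0 := by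
  simp [psi]

lemma psi_add (p i ℓ : ℕ) (F G : Polynomial ℤ) :
    psi p i ℓ (F + G) = psi p i ℓ F + psi p i ℓ G := by
  unfold psi
  apply Polynomial.sum_add_index
  · intro m; simp
  · intro m a b; split <;> ring

lemma psi_monomial (p i ℓ : ℕ) (n : ℕ) (a : ℤ) :
    psi p i ℓ (monomial n a) = if n % p = i % p then (n : ℤ) ^ ℓ * a else 0 := by
  unfold psi
  apply Polynomial.sum_monomial_index
  simp

lemma psi_C_mul (p i ℓ : ℕ) (c : ℤ) (F : Polynomial ℤ) :
    psi p i ℓ (C c * F) = c * psi p i ℓ F := by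
  induction F using Polynomial.induction_on' with
  | add f g hf hg => rw [mul_add, psi_add, psi_add, hf, hg]; ring
  | monomial n a =>
      rw [C_mul_monomial, psi_monomial, psi_monomial]
      split <;> ring

lemma psi_neg (p i ℓ : ℕ) (F : Polynomial ℤ) : psi p i ℓ (-F) = -psi p i ℓ F := by
  have := psi_C_mul p i ℓ (-1) F
  simpa using this

lemma psi_sub (p i ℓ : ℕ) (F G : Polynomial ℤ) :
    psi p i ℓ (F - G) = psi p i ℓ F - psi p i ℓ G := by
  rw [sub_eq_add_neg, psi_add, psi_neg, sub_eq_add_neg]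

lemma psi_sum (p i ℓ : ℕ) {α : Type*} (s : Finset α) (F : α → Polynomial ℤ) :
    psi p i ℓ (∑ x ∈ s, F x) = ∑ x ∈ s, psi p i ℓ (F x) := by
  induction s using Finset.cons_induction with
  | empty => simp [psi_zero]
  | cons x s hx ih => rw [Finset.sum_cons, psi_add, ih, Finset.sum_cons]

lemma psi_mul_X_pow (p i ℓ : ℕ) (F : Polynomial ℤ) :
    psi p i ℓ (F * X ^ p) =
      ∑ t ∈ range (ℓ + 1), (ℓ.choose t : ℤ) * (p : ℤ) ^ (ℓ - t) * psi p i t F := by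
  induction F using Polynomial.induction_on' with
  | add f g hf hg =>
      rw [add_mul, psi_add, hf, hg, ← Finset.sum_add_distrib]
      apply Finset.sum_congr rfl
      intro t _
      rw [psi_add]; ring
  | monomial n a =>
      rw [monomial_mul_X_pow, psi_monomial]
      have hmod : (n + p) % p = n % p := Nat.add_mod_right n p
      rw [hmod]
      by_cases hc : n % p = i % p
      · rw [if_pos hc]
        have hcong : ∀ t ∈ range (ℓ + 1),
            (ℓ.choose t : ℤ) * (p : ℤ) ^ (ℓ - t) * psi p i t (monomial n a)
              = ((n : ℤ) ^ t * (p : ℤ) ^ (ℓ - t) * (ℓ.choose t : ℤ)) * a := by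
          intro t _
          rw [psi_monomial, if_pos hc]; ring
        rw [Finset.sum_congr rfl hcong, ← Finset.sum_mul, ← add_pow]
        push_cast
        ring
      · rw [if_neg hc]
        have hcong : ∀ t ∈ range (ℓ + 1),
            (ℓ.choose t : ℤ) * (p : ℤ) ^ (ℓ - t) * psi p i t (monomial n a) = 0 := by
          intro t _
          rw [psi_monomial, if_neg hc]; ring
        rw [Finset.sum_congr rfl hcong, Finset.sum_const, smul_zero]

lemma exists_u {p : ℕ} (hp : p.Prime) :
    ∃ u : Polynomial ℤ, (1 - X) ^ p = 1 - X ^ p + C (p : ℤ) * ((1 - X) * u) := by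
  haveI : Fact p.Prime := ⟨hp⟩
  have hdvd : C (p : ℤ) ∣ ((1 - X) ^ p - (1 - X ^ p)) := by
    rw [Polynomial.C_dvd_iff_dvd_coeff]
    intro m
    have hmap : Polynomial.map (Int.castRingHom (ZMod p)) ((1 - X) ^ p - (1 - X ^ p)) = 0 := by
      rw [Polynomial.map_sub, Polynomial.map_pow, Polynomial.map_sub, Polynomial.map_sub,
        Polynomial.map_one, Polynomial.map_X, Polynomial.map_pow, Polynomial.map_X]
      rw [sub_pow_char]
      simp
    have h2 := congrArg (fun q => Polynomial.coeff q m) hmap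
    simp only [Polynomial.coeff_map, Polynomial.coeff_zero] at h2
    exact_mod_cast (ZMod.intCast_zmod_eq_zero_iff_dvd _ _).mp h2
  obtain ⟨g₁, hg₁⟩ := hdvd
  have heval : g₁.eval 1 = 0 := by
    have h0 : ((1 - X : Polynomial ℤ) ^ p - (1 - X ^ p)).eval 1 = 0 := by simp [hp.pos.ne']
    rw [hg₁] at h0
    simp only [eval_mul, eval_C] at h0
    have hp0 : (p : ℤ) ≠ 0 := Int.natCast_ne_zero.mpr hp.ne_zero
    exact (mul_eq_zero.mp h0).resolve_left hp0
  obtain ⟨v, hv⟩ := Polynomial.dvd_iff_isRoot.mpr heval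
  refine ⟨-v, ?_⟩
  have hg : g₁ = (1 - X) * -v := by rw [hv, C_1]; ring
  rw [← hg, ← hg₁]; ring

lemma key {p : ℕ} (hp : p.Prime) (i : ℕ) :
    ∀ n : ℕ, ∀ ℓ : ℕ, ∀ h : Polynomial ℤ,
      (p : ℤ) ^ (n / p) ∣ psi p i ℓ (h * (1 - X) ^ n) := by
  intro n
  induction n using Nat.strong_induction_on with
  | _ n ih =>
    intro ℓ h
    by_cases hn : n < p
    · rw [Nat.div_eq_of_lt hn, pow_zero]
      exact one_dvd _
    · push_neg at hn
      have hp2 : 2 ≤ p := hp.two_le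
      obtain ⟨u, hu⟩ := exists_u hp
      set n' := n - p with hn'
      have hnn : n = n' + p := (Nat.sub_add_cancel hn).symm
      have expand : h * (1 - X) ^ n =
          (h * (1 - X) ^ n' - (h * (1 - X) ^ n') * X ^ p)
            + C (p : ℤ) * (u * h * (1 - X) ^ (n' + 1)) := by
        rw [hnn, pow_add, hu]; ring
      rw [expand, psi_add, psi_sub, psi_mul_X_pow, Finset.sum_range_succ]
      have hdiv : n / p = n' / p + 1 := by
        rw [hnn]; exact Nat.add_div_right _ hp.pos
      simp only [Nat.choose_self, Nat.cast_one, Nat.sub_self, pow_zero, one_mul]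
      have e1 : psi p i ℓ (h * (1 - X) ^ n')
            - (∑ t ∈ range ℓ, (ℓ.choose t : ℤ) * (p : ℤ) ^ (ℓ - t) * psi p i t (h * (1 - X) ^ n')
              + psi p i ℓ (h * (1 - X) ^ n'))
            + psi p i ℓ (C (p : ℤ) * (u * h * (1 - X) ^ (n' + 1)))
          = -(∑ t ∈ range ℓ, (ℓ.choose t : ℤ) * (p : ℤ) ^ (ℓ - t) * psi p i t (h * (1 - X) ^ n'))
            + (p : ℤ) * psi p i ℓ (u * h * (1 - X) ^ (n' + 1)) := by
        rw [psi_C_mul]; ring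
      rw [e1, hdiv]
      apply dvd_add
      · rw [dvd_neg]
        apply Finset.dvd_sum
        intro t ht
        have h1 : (p : ℤ) ∣ (p : ℤ) ^ (ℓ - t) := by
          apply dvd_pow_self
          have := Finset.mem_range.mp ht
          omega
        have h2 : (p : ℤ) ^ (n' / p) ∣ psi p i t (h * (1 - X) ^ n') := ih n' (by omega) t h
        have h3 : (p : ℤ) ^ (n' / p + 1) ∣ (p : ℤ) ^ (ℓ - t) * psi p i t (h * (1 - X) ^ n') := by
          have := mul_dvd_mul h1 h2
          rwa [pow_succ, mul_comm ((p : ℤ) ^ (n' / p)) (p : ℤ)]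
        have h4 := h3.mul_left (ℓ.choose t : ℤ)
        simpa [mul_assoc] using h4
      · have h4 : (p : ℤ) ^ ((n' + 1) / p) ∣ psi p i ℓ (u * h * (1 - X) ^ (n' + 1)) :=
          ih (n' + 1) (by omega) ℓ (u * h)
        have h5 : (p : ℤ) ^ ((n' + 1) / p + 1) ∣ (p : ℤ) * psi p i ℓ (u * h * (1 - X) ^ (n' + 1)) := by
          rw [pow_succ, mul_comm ((p : ℤ) ^ ((n' + 1) / p)) (p : ℤ)]
          exact mul_dvd_mul_left _ h4
        refine dvd_trans (pow_dvd_pow _ ?_) h5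
        have := Nat.div_le_div_right (c := p) (Nat.le_add_right n' 1)
        omega

theorem stmt12 (k : ℕ) (hk : 1 ≤ k) (p : ℕ) (hp : p.Prime) (ℓ : ℕ)
    (i : ℕ) (hi : 1 ≤ i) (hi' : i ≤ p - 1) :
    ((p : ℤ) ^ k) ∣ ∑ j ∈ Finset.range k,
      (-1 : ℤ) ^ (j * p) * (Nat.choose (k * p) (j * p + i) : ℤ) *
        ((j : ℤ) * p + i) ^ ℓ := by
  have hip : i < p := by omega
  have hkey := key hp i (k * p) ℓ 1
  rw [one_mul, Nat.mul_div_cancel _ hp.pos] at hkey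
  have hexp : ((1 : Polynomial ℤ) - X) ^ (k * p)
      = ∑ m ∈ range (k * p + 1), C ((-1) ^ m * (((k * p).choose m : ℕ) : ℤ)) * X ^ m := by
    have h := add_pow (-X : Polynomial ℤ) 1 (k * p)
    rw [neg_add_eq_sub] at h
    rw [h]
    refine Finset.sum_congr rfl fun m _ => ?_
    rw [map_mul, map_pow, map_neg, map_one, one_pow, mul_one, neg_pow, ← C_eq_natCast]
    ring
  rw [hexp, psi_sum] at hkey
  have hval : ∀ m : ℕ, psi p i ℓ (C ((-1) ^ m * (((k * p).choose m : ℕ) : ℤ)) * X ^ m)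
      = if m % p = i % p then (m : ℤ) ^ ℓ * ((-1) ^ m * (((k * p).choose m : ℕ) : ℤ)) else 0 :=
    fun m => by rw [C_mul_X_pow_eq_monomial, psi_monomial]
  simp only [hval] at hkey
  set e : ℕ → ℤ := fun m =>
    if m % p = i % p then (m : ℤ) ^ ℓ * ((-1) ^ m * (((k * p).choose m : ℕ) : ℤ)) else 0 with he
  -- reindex the sum over residues
  have himg : (range k).image (fun j => j * p + i) ⊆ range (k * p + 1) := by
    intro m hm
    obtain ⟨j, hj, rfl⟩ := Finset.mem_image.mp hm
    have hj' : j < k := Finset.mem_range.mp hj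
    have h1 : (j + 1) * p ≤ k * p := Nat.mul_le_mul_right p (by omega)
    have h2 : (j + 1) * p = j * p + p := by ring
    exact Finset.mem_range.mpr (by omega)
  have hvanish : ∀ m ∈ range (k * p + 1), m ∉ (range k).image (fun j => j * p + i) → e m = 0 := by
    intro m hm hnot
    rw [he]
    dsimp only
    by_cases hc : m % p = i % p
    · exfalso
      have h1 : p * (m / p) + m % p = m := Nat.div_add_mod m p
      have h2 : m % p = i := by rw [hc, Nat.mod_eq_of_lt hip]
      have hmlt : m < k * p := by
        have hm' := Finset.mem_range.mp hm
        rcases Nat.lt_or_ge m (k * p) with h | h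
        · exact h
        · exfalso
          have hmeq : m = k * p := by omega
          have : m % p = 0 := by rw [hmeq, Nat.mul_mod_left]
          omega
      have hjk : m / p < k := (Nat.div_lt_iff_lt_mul hp.pos).mpr hmlt
      refine hnot (Finset.mem_image.mpr ⟨m / p, Finset.mem_range.mpr hjk, ?_⟩)
      have h3 := Nat.mul_comm (m / p) p
      omega
    · rw [if_neg hc]
  have hinj : Set.InjOn (fun j => j * p + i) (range k) := by
    intro a _ b _ hab
    simp only at hab
    have : a * p = b * p := by omega
    exact Nat.eq_of_mul_eq_mul_right hp.pos this
  have hre : ∑ j ∈ range k, e (j * p + i) = ∑ m ∈ range (k * p + 1), e m := by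
    rw [← Finset.sum_image hinj]
    exact Finset.sum_subset himg hvanish
  rw [← hre] at hkey
  have hterm : ∀ j : ℕ, e (j * p + i)
      = (-1 : ℤ) ^ i * ((-1 : ℤ) ^ (j * p) * (((k * p).choose (j * p + i) : ℕ) : ℤ)
          * ((j : ℤ) * p + i) ^ ℓ) := by
    intro j
    rw [he]
    dsimp only
    have hc : (j * p + i) % p = i % p := by
      rw [Nat.add_comm, Nat.add_mul_mod_self_right]
    rw [if_pos hc, pow_add]
    push_cast
    ring
  rw [Finset.sum_congr rfl fun j _ => hterm j, ← Finset.mul_sum] at hkey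
  have hsq : ((-1 : ℤ) ^ i) * ((-1 : ℤ) ^ i) = 1 := by
    rw [← pow_add]
    exact Even.neg_one_pow ⟨i, rfl⟩
  have := hkey.mul_left ((-1 : ℤ) ^ i)
  rw [← mul_assoc, hsq, one_mul] at this
  exact this
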